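/- Let (G,σ,w) be a positive-connected signed graph with consensus index ε₀ satisfying the "no negative cycle" assumption that no two distinct edges of E₋ are contained in a common cycle of G. Then for every edge (i,j) ∈ E₋, ε₀ ≤ 1/(w_ij · r_ij), where r_ij is the effective resistance between i and j in the positive subgraph (V, E₊, w⁺). -/

import Mathlib

open Matrix BigOperators

open scoped Classical

/-- Moore–Penrose pseudoinverse of a square real matrix (chosen via the
defining Penrose equations; it is unique when it exists). -/
noncomputable def pinv {n : ℕ} (A : Matrix (Fin n) (Fin n) ℝ) : Matrix (Fin n) (Fin n) ℝ :=
  if h : ∃ B : Matrix (Fin n) (Fin n) ℝ,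
      A * B * A = A ∧ B * A * B = B ∧ (A * B)ᵀ = A * B ∧ (B * A)ᵀ = B * A
  then h.choose else 0

/-- The eigenvalues of a symmetric real matrix, sorted in nondecreasing order. -/
noncomputable def sortedEigs {n : ℕ} (A : Matrix (Fin n) (Fin n) ℝ) : List ℝ :=
  if h : A.IsHermitian then (Finset.univ.val.map h.eigenvalues).sort (· ≤ ·) else []

/-- The second smallest eigenvalue (with multiplicity) of a symmetric real matrix. -/
noncomputable def secondSmallestEig {n : ℕ} (A : Matrix (Fin n) (Fin n) ℝ) : ℝ :=
  (sortedEigs A).getD 1 0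

/-- The largest eigenvalue of a symmetric real matrix. -/
noncomputable def largestEig {n : ℕ} (A : Matrix (Fin n) (Fin n) ℝ) : ℝ :=
  (sortedEigs A).getD (n - 1) 0

/-- A signed weighted graph on `n` vertices, given by the positive-part and
negative-part weight functions (an edge carries a positive weight and a sign;
`wplus i j > 0` iff `(i,j)` is a positive edge, `wminus i j > 0` iff it is a
negative edge). -/
structure SignedGraph (n : ℕ) where
  wplus : Fin n → Fin n → ℝ
  wminus : Fin n → Fin n → ℝ
  wplus_symm : ∀ i j, wplus i j = wplus j i
  wminus_symm : ∀ i j, wminus i j = wminus j i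
  wplus_nonneg : ∀ i j, 0 ≤ wplus i j
  wminus_nonneg : ∀ i j, 0 ≤ wminus i j
  wplus_diag : ∀ i, wplus i i = 0
  wminus_diag : ∀ i, wminus i i = 0
  disjoint : ∀ i j, wplus i j = 0 ∨ wminus i j = 0

namespace SignedGraph

variable {n : ℕ} (Γ : SignedGraph n)

/-- positive degree -/
noncomputable def dplus (i : Fin n) : ℝ := ∑ j, Γ.wplus i j

/-- negative degree -/
noncomputable def dminus (i : Fin n) : ℝ := ∑ j, Γ.wminus i j

/-- Laplacian of the positive subgraph -/
noncomputable def Lplus : Matrix (Fin n) (Fin n) ℝ :=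
  Matrix.of fun i j => if i = j then Γ.dplus i else -Γ.wplus i j

/-- Laplacian of the negative subgraph -/
noncomputable def Lminus : Matrix (Fin n) (Fin n) ℝ :=
  Matrix.of fun i j => if i = j then Γ.dminus i else -Γ.wminus i j

/-- the ε-repelling Laplacian `L₊ - ε L₋` -/
noncomputable def Leps (ε : ℝ) : Matrix (Fin n) (Fin n) ℝ := Γ.Lplus - ε • Γ.Lminus

/-- the positive subgraph as a simple graph -/
def posGraph : SimpleGraph (Fin n) := SimpleGraph.fromRel (fun i j => 0 < Γ.wplus i j)

/-- the negative subgraph as a simple graph -/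
def negGraph : SimpleGraph (Fin n) := SimpleGraph.fromRel (fun i j => 0 < Γ.wminus i j)

/-- the underlying simple graph -/
def underlying : SimpleGraph (Fin n) :=
  SimpleGraph.fromRel (fun i j => 0 < Γ.wplus i j + Γ.wminus i j)

/-- the signed graph is positive-connected -/
def PosConnected : Prop := Γ.posGraph.Connected

/-- the signed graph is negative-connected -/
def NegConnected : Prop := Γ.negGraph.Connected

/-- the consensus index ε₀ -/
noncomputable def consensusIndex : ℝ :=
  sSup {ε : ℝ | 0 < ε ∧ (Γ.Leps ε).PosSemidef ∧ (Γ.Leps ε).rank = n - 1}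

/-- the ε-repelling cost Ω_ε(i,j) = (e_i - e_j)ᵀ L_ε† (e_i - e_j) -/
noncomputable def cost (ε : ℝ) (i j : Fin n) : ℝ :=
  (Pi.single i 1 - Pi.single j 1) ⬝ᵥ (pinv (Γ.Leps ε)) *ᵥ (Pi.single i 1 - Pi.single j 1)

/-- the ε-repelling matrix Ω_ε -/
noncomputable def costMatrix (ε : ℝ) : Matrix (Fin n) (Fin n) ℝ :=
  Matrix.of fun i j => Γ.cost ε i j

/-- the node ε-repelling curvature, the unique solution of Ω_ε τ_ε = n·1 -/
noncomputable def tau (ε : ℝ) : Fin n → ℝ :=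
  (Γ.costMatrix ε)⁻¹ *ᵥ (fun _ => (n : ℝ))

/-- φ_ε = n · 1ᵀ Ω_ε⁻¹ 1 -/
noncomputable def phi (ε : ℝ) : ℝ :=
  (n : ℝ) * ((fun _ => (1 : ℝ)) ⬝ᵥ ((Γ.costMatrix ε)⁻¹ *ᵥ fun _ => (1 : ℝ)))

/-- the quantity Λ_ε(i,j) appearing in the edge ε-repelling curvature -/
noncomputable def Lam (ε : ℝ) (i j : Fin n) : ℝ :=
  (Γ.dminus i + Γ.dminus j)
    - (∑ k, Γ.cost ε j k * Γ.wminus i k + ∑ k, Γ.cost ε i k * Γ.wminus j k) / Γ.cost ε i j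

/-- the edge ε-repelling curvature ϑ_ε(i,j) -/
noncomputable def edgeCurv (ε : ℝ) (i j : Fin n) : ℝ :=
  2 * (Γ.tau ε i + Γ.tau ε j) / Γ.cost ε i j + (1 + ε) * Γ.Lam ε i j

end SignedGraph

lemma exists_isPinv {n : ℕ} {A : Matrix (Fin n) (Fin n) ℝ} (hA : A.IsHermitian) :
    ∃ B : Matrix (Fin n) (Fin n) ℝ,
      A * B * A = A ∧ B * A * B = B ∧ (A * B)ᵀ = A * B ∧ (B * A)ᵀ = B * A := by
  set U : Matrix (Fin n) (Fin n) ℝ := (hA.eigenvectorUnitary : Matrix (Fin n) (Fin n) ℝ) with hU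
  have hU1 : star U * U = 1 := Matrix.mem_unitaryGroup_iff'.mp hA.eigenvectorUnitary.2
  have hU2 : U * star U = 1 := Matrix.mem_unitaryGroup_iff.mp hA.eigenvectorUnitary.2
  set d : Fin n → ℝ := RCLike.ofReal ∘ hA.eigenvalues with hd
  have hAspec : A = U * Matrix.diagonal d * star U := hA.spectral_theorem
  set e : Fin n → ℝ := fun i => (d i)⁻¹ with he
  have hsU : star U = Uᵀ := by
    rw [Matrix.star_eq_conjTranspose, Matrix.conjTranspose_eq_transpose_of_trivial]
  have key : ∀ f g : Fin n → ℝ,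
      (U * Matrix.diagonal f * star U) * (U * Matrix.diagonal g * star U)
        = U * Matrix.diagonal (fun i => f i * g i) * star U := by
    intro f g
    simp only [Matrix.mul_assoc]
    rw [← Matrix.mul_assoc (star U) U, hU1, Matrix.one_mul,
      ← Matrix.mul_assoc (Matrix.diagonal f), Matrix.diagonal_mul_diagonal]
  have key3 : ∀ f g h : Fin n → ℝ,
      (U * Matrix.diagonal f * star U) * (U * Matrix.diagonal g * star U)
        * (U * Matrix.diagonal h * star U)
        = U * Matrix.diagonal (fun i => f i * g i * h i) * star U := by
    intro f g h
    rw [key, key]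
  have hstar : ∀ f : Fin n → ℝ, (U * Matrix.diagonal f * star U)ᵀ
      = U * Matrix.diagonal f * star U := by
    intro f
    rw [hsU]
    simp [Matrix.transpose_mul, Matrix.diagonal_transpose, Matrix.mul_assoc]
  refine ⟨U * Matrix.diagonal e * star U, ?_, ?_, ?_, ?_⟩
  · rw [hAspec, key3]
    rw [show (fun i => d i * e i * d i) = d from funext fun i => by
      rcases eq_or_ne (d i) 0 with h | h
      · simp [he, h]
      · simp [he, h]]
  · rw [hAspec, key3]
    rw [show (fun i => e i * d i * e i) = e from funext fun i => by
      rcases eq_or_ne (d i) 0 with h | h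
      · simp [he, h]
      · simp [he, h]]
  · rw [hAspec, key]; exact hstar _
  · rw [hAspec, key]; exact hstar _

lemma isPinv_unique {n : ℕ} {A B C : Matrix (Fin n) (Fin n) ℝ}
    (hB1 : A * B * A = A) (hB2 : B * A * B = B) (hB3 : (A * B)ᵀ = A * B) (hB4 : (B * A)ᵀ = B * A)
    (hC1 : A * C * A = A) (hC2 : C * A * C = C) (hC3 : (A * C)ᵀ = A * C) (hC4 : (C * A)ᵀ = C * A) :
    B = C := by
  have hAB : A * B = A * C := by
    calc A * B = (A * B)ᵀ := hB3.symm
      _ = ((A * C * A) * B)ᵀ := by rw [hC1]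
      _ = (A * B)ᵀ * (A * C)ᵀ := by rw [← Matrix.transpose_mul]; simp only [Matrix.mul_assoc]
      _ = (A * B) * (A * C) := by rw [hB3, hC3]
      _ = (A * B * A) * C := by simp only [Matrix.mul_assoc]
      _ = A * C := by rw [hB1]
  have hBA : B * A = C * A := by
    calc B * A = (B * A)ᵀ := hB4.symm
      _ = (B * (A * C * A))ᵀ := by rw [hC1]
      _ = (C * A)ᵀ * (B * A)ᵀ := by rw [← Matrix.transpose_mul]; simp only [Matrix.mul_assoc]
      _ = (C * A) * (B * A) := by rw [hB4, hC4]
      _ = C * (A * B * A) := by simp only [Matrix.mul_assoc]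
      _ = C * A := by rw [hB1]
  calc B = B * A * B := hB2.symm
    _ = B * (A * C) := by rw [← hAB]; simp only [Matrix.mul_assoc]
    _ = (C * A) * C := by rw [← hBA]; simp only [Matrix.mul_assoc]
    _ = C := hC2

section Lap
variable {n : ℕ} (w : Fin n → Fin n → ℝ)

noncomputable def lap : Matrix (Fin n) (Fin n) ℝ :=
  Matrix.of fun i j => if i = j then ∑ l, w i l else -w i j

variable {w}

lemma lap_mulVec (hdiag : ∀ i, w i i = 0) (y : Fin n → ℝ) (k : Fin n) :
    (lap w *ᵥ y) k = (∑ l, w k l) * y k - ∑ l, w k l * y l := by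
  show ∑ l, (if k = l then ∑ m, w k m else -w k l) * y l = _
  have : ∀ l ∈ Finset.univ, (if k = l then ∑ m, w k m else -w k l) * y l
      = (if l = k then (∑ m, w k m) * y k else 0) - w k l * y l := by
    intro l _
    rcases eq_or_ne k l with h | h
    · subst h; simp [hdiag k]
    · simp [h, h.symm]
  rw [Finset.sum_congr rfl this, Finset.sum_sub_distrib, Finset.sum_ite_eq' Finset.univ k]
  simp

lemma lap_quad (hsymm : ∀ i j, w i j = w j i) (hdiag : ∀ i, w i i = 0) (y : Fin n → ℝ) :
    2 * (y ⬝ᵥ lap w *ᵥ y) = ∑ k, ∑ l, w k l * (y k - y l) ^ 2 := by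
  have hswap : ∑ k, ∑ l, w k l * y l ^ 2 = ∑ k, ∑ l, w k l * y k ^ 2 := by
    rw [Finset.sum_comm]
    exact Finset.sum_congr rfl fun k _ => Finset.sum_congr rfl fun l _ => by rw [hsymm]
  have hlhs : y ⬝ᵥ lap w *ᵥ y
      = (∑ k, ∑ l, w k l * y k ^ 2) - ∑ k, ∑ l, w k l * (y k * y l) := by
    rw [← Finset.sum_sub_distrib]
    show ∑ k, y k * (lap w *ᵥ y) k = _
    refine Finset.sum_congr rfl fun k _ => ?_
    rw [lap_mulVec hdiag, mul_sub, Finset.sum_mul, Finset.mul_sum, Finset.mul_sum]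
    congr 1
    · exact Finset.sum_congr rfl fun l _ => by ring
    · exact Finset.sum_congr rfl fun l _ => by ring
  have hrhs : ∑ k, ∑ l, w k l * (y k - y l) ^ 2
      = (∑ k, ∑ l, w k l * y k ^ 2) + (∑ k, ∑ l, w k l * y l ^ 2)
        - 2 * ∑ k, ∑ l, w k l * (y k * y l) := by
    rw [Finset.mul_sum, ← Finset.sum_add_distrib, ← Finset.sum_sub_distrib]
    refine Finset.sum_congr rfl fun k _ => ?_
    rw [Finset.mul_sum, ← Finset.sum_add_distrib, ← Finset.sum_sub_distrib]
    exact Finset.sum_congr rfl fun l _ => by ring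
  rw [hlhs, hrhs, hswap]
  ring

lemma lap_quad_nonneg (hsymm : ∀ i j, w i j = w j i) (hdiag : ∀ i, w i i = 0)
    (hnn : ∀ i j, 0 ≤ w i j) (y : Fin n → ℝ) : 0 ≤ y ⬝ᵥ lap w *ᵥ y := by
  have h := lap_quad hsymm hdiag y
  nlinarith [Finset.sum_nonneg fun k (_ : k ∈ Finset.univ) =>
    Finset.sum_nonneg fun l (_ : l ∈ Finset.univ) =>
      mul_nonneg (hnn k l) (sq_nonneg (y k - y l))]

lemma lap_transpose (hsymm : ∀ i j, w i j = w j i) : (lap w)ᵀ = lap w := by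
  ext i j
  show lap w j i = lap w i j
  rcases eq_or_ne i j with h | h
  · subst h; rfl
  · show (if j = i then _ else -w j i) = (if i = j then _ else -w i j)
    rw [if_neg h.symm, if_neg h, hsymm]

lemma lap_isHermitian (hsymm : ∀ i j, w i j = w j i) : (lap w).IsHermitian := by
  rw [Matrix.IsHermitian, Matrix.conjTranspose_eq_transpose_of_trivial]
  exact lap_transpose hsymm

lemma lap_posSemidef (hsymm : ∀ i j, w i j = w j i) (hdiag : ∀ i, w i i = 0)
    (hnn : ∀ i j, 0 ≤ w i j) : (lap w).PosSemidef := by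
  refine Matrix.PosSemidef.of_dotProduct_mulVec_nonneg (lap_isHermitian hsymm) fun y => ?_
  simpa using lap_quad_nonneg hsymm hdiag hnn y

lemma lap_quad_ge (hsymm : ∀ i j, w i j = w j i) (hdiag : ∀ i, w i i = 0)
    (hnn : ∀ i j, 0 ≤ w i j) (y : Fin n → ℝ) {i j : Fin n} (hij : i ≠ j) :
    w i j * (y i - y j) ^ 2 ≤ y ⬝ᵥ lap w *ᵥ y := by
  have h := lap_quad hsymm hdiag y
  have hsub : ({(i, j), (j, i)} : Finset (Fin n × Fin n)) ⊆ Finset.univ ×ˢ Finset.univ := by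
    intro p _; simp
  have hbig : ∑ p ∈ ({(i, j), (j, i)} : Finset (Fin n × Fin n)), w p.1 p.2 * (y p.1 - y p.2) ^ 2
      ≤ ∑ p ∈ Finset.univ ×ˢ Finset.univ, w p.1 p.2 * (y p.1 - y p.2) ^ 2 := by
    refine Finset.sum_le_sum_of_subset_of_nonneg hsub fun p _ _ =>
      mul_nonneg (hnn _ _) (sq_nonneg _)
  have hpair : ∑ p ∈ ({(i, j), (j, i)} : Finset (Fin n × Fin n)),
      w p.1 p.2 * (y p.1 - y p.2) ^ 2 = 2 * (w i j * (y i - y j) ^ 2) := by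
    rw [Finset.sum_insert (by simp [Prod.ext_iff, hij]), Finset.sum_singleton]
    rw [hsymm j i]
    ring
  rw [← Finset.sum_product'] at h
  nlinarith [hbig, h, hpair]

lemma lap_mulVec_one (hdiag : ∀ i, w i i = 0) :
    lap w *ᵥ (fun _ => (1 : ℝ)) = 0 := by
  funext k
  rw [lap_mulVec hdiag]
  simp

end Lap

lemma lap_exists_preimage {n : ℕ} {w : Fin n → Fin n → ℝ}
    (hsymm : ∀ i j, w i j = w j i) (hdiag : ∀ i, w i i = 0)
    (hconn : ∀ y : Fin n → ℝ, lap w *ᵥ y = 0 → ∀ k l, y k = y l)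
    (hn : 0 < n) {u : Fin n → ℝ} (hu : ∑ k, u k = 0) : ∃ z, lap w *ᵥ z = u := by
  set f := (lap w).mulVecLin with hf
  let g : (Fin n → ℝ) →ₗ[ℝ] ℝ :=
    { toFun := fun v => ∑ k, v k
      map_add' := fun a b => by simp [Finset.sum_add_distrib]
      map_smul' := fun c a => by simp [Finset.mul_sum] }
  have i0 : Fin n := ⟨0, hn⟩
  have hgsurj : Function.Surjective g := fun c =>
    ⟨Pi.single i0 c, by simp [g]⟩
  have hn1 : Module.finrank ℝ (Fin n → ℝ) = n := Module.finrank_fin_fun ℝ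
  have hker_g : Module.finrank ℝ (LinearMap.ker g) = n - 1 := by
    have h1 := LinearMap.finrank_range_add_finrank_ker g
    rw [LinearMap.range_eq_top.2 hgsurj, finrank_top, Module.finrank_self, hn1] at h1
    omega
  have hone : (fun _ => (1 : ℝ)) ≠ (0 : Fin n → ℝ) := by
    intro h
    have := congrFun h i0
    norm_num at this
  have hkerf : LinearMap.ker f = Submodule.span ℝ {fun _ => (1 : ℝ)} := by
    apply le_antisymm
    · intro y hy
      rw [LinearMap.mem_ker, hf, Matrix.mulVecLin_apply] at hy
      have hconst : y = y i0 • (fun _ => (1 : ℝ)) := by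
        funext k
        simpa using hconn y hy k i0
      rw [hconst]
      exact Submodule.smul_mem _ _ (Submodule.mem_span_singleton_self _)
    · rw [Submodule.span_le, Set.singleton_subset_iff]
      show f (fun _ => (1 : ℝ)) = 0
      rw [hf, Matrix.mulVecLin_apply, lap_mulVec_one hdiag]
  have hkerf_rank : Module.finrank ℝ (LinearMap.ker f) = 1 := by
    rw [hkerf]
    exact finrank_span_singleton hone
  have hrangef : Module.finrank ℝ (LinearMap.range f) = n - 1 := by
    have h1 := LinearMap.finrank_range_add_finrank_ker f
    rw [hkerf_rank, hn1] at h1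
    omega
  have hle : LinearMap.range f ≤ LinearMap.ker g := by
    rintro _ ⟨v, rfl⟩
    rw [LinearMap.mem_ker]
    show ∑ k, (f v) k = 0
    have h2 : ∑ k, (f v) k = (fun _ => (1 : ℝ)) ⬝ᵥ (lap w *ᵥ v) := by
      simp [hf, dotProduct, Matrix.mulVecLin_apply]
    rw [h2, Matrix.dotProduct_mulVec, ← lap_transpose hsymm, Matrix.vecMul_transpose,
      lap_mulVec_one hdiag, zero_dotProduct]
  have heq : LinearMap.range f = LinearMap.ker g :=
    Submodule.eq_of_le_of_finrank_eq hle (by rw [hrangef, hker_g])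
  have hu' : u ∈ LinearMap.ker g := by
    rw [LinearMap.mem_ker]
    exact hu
  rw [← heq] at hu'
  obtain ⟨z, hz⟩ := hu'
  exact ⟨z, hz⟩


lemma pinv_spec {n : ℕ} {A : Matrix (Fin n) (Fin n) ℝ} (hA : A.IsHermitian) :
    A * pinv A * A = A ∧ pinv A * A * pinv A = pinv A ∧
      (A * pinv A)ᵀ = A * pinv A ∧ (pinv A * A)ᵀ = pinv A * A := by
  have h := exists_isPinv hA
  unfold pinv
  rw [dif_pos h]
  exact h.choose_spec

lemma pinv_symm {n : ℕ} {A : Matrix (Fin n) (Fin n) ℝ} (hA : A.IsHermitian)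
    (hAt : Aᵀ = A) : (pinv A)ᵀ = pinv A := by
  obtain ⟨h1, h2, h3, h4⟩ := pinv_spec hA
  have hABt : A * (pinv A)ᵀ = pinv A * A := by
    calc A * (pinv A)ᵀ = Aᵀ * (pinv A)ᵀ := by rw [hAt]
      _ = (pinv A * A)ᵀ := (Matrix.transpose_mul _ _).symm
      _ = pinv A * A := h4
  have hBAt : (pinv A)ᵀ * A = A * pinv A := by
    calc (pinv A)ᵀ * A = (pinv A)ᵀ * Aᵀ := by rw [hAt]
      _ = (A * pinv A)ᵀ := (Matrix.transpose_mul _ _).symm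
      _ = A * pinv A := h3
  have e1 : A * (pinv A)ᵀ * A = A := by
    have h := congrArg Matrix.transpose h1
    rw [Matrix.transpose_mul, Matrix.transpose_mul, hAt] at h
    rw [← Matrix.mul_assoc] at h
    exact h
  have e2 : (pinv A)ᵀ * A * (pinv A)ᵀ = (pinv A)ᵀ := by
    have h := congrArg Matrix.transpose h2
    rw [Matrix.transpose_mul, Matrix.transpose_mul, hAt] at h
    rw [← Matrix.mul_assoc] at h
    exact h
  have e3 : (A * (pinv A)ᵀ)ᵀ = A * (pinv A)ᵀ := by rw [hABt]; exact h4
  have e4 : ((pinv A)ᵀ * A)ᵀ = (pinv A)ᵀ * A := by rw [hBAt]; exact h3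
  exact isPinv_unique e1 e2 e3 e4 h1 h2 h3 h4

lemma mulVec_dot {n : ℕ} (M : Matrix (Fin n) (Fin n) ℝ) (u v : Fin n → ℝ) :
    (M *ᵥ u) ⬝ᵥ v = u ⬝ᵥ (Mᵀ *ᵥ v) := by
  rw [Matrix.dotProduct_mulVec, Matrix.vecMul_transpose]

/-- under the "no negative cycle" assumption, the consensus index
is at most `1/(w_ij r_ij)` for every negative edge `(i,j)`, where `r_ij` is the
effective resistance in the positive subgraph. -/
theorem stmt8 {n : ℕ} (Γ : SignedGraph n) (hpc : Γ.PosConnected)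
    (hnnc : ∀ (v : Fin n) (c : Γ.underlying.Walk v v), c.IsCycle →
      ∀ i j k l : Fin n, s(i, j) ∈ c.edges → s(k, l) ∈ c.edges →
        0 < Γ.wminus i j → 0 < Γ.wminus k l → s(i, j) = s(k, l)) :
    ∀ i j : Fin n, 0 < Γ.wminus i j →
      Γ.consensusIndex ≤ 1 / (Γ.wminus i j *
        ((Pi.single i 1 - Pi.single j 1) ⬝ᵥ
          (pinv Γ.Lplus) *ᵥ (Pi.single i 1 - Pi.single j 1))) := by
  intro i j hwij
  have hne : i ≠ j := by
    rintro rfl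
    rw [Γ.wminus_diag] at hwij
    exact lt_irrefl 0 hwij
  have hn : 0 < n := i.pos
  have hLp : Γ.Lplus = lap Γ.wplus := rfl
  have hLm : Γ.Lminus = lap Γ.wminus := rfl
  have hsymmM : Γ.Lplusᵀ = Γ.Lplus := lap_transpose Γ.wplus_symm
  have hherm : Γ.Lplus.IsHermitian := lap_isHermitian Γ.wplus_symm
  set u : Fin n → ℝ := Pi.single i 1 - Pi.single j 1 with hu
  obtain ⟨h1, h2, h3, h4⟩ := pinv_spec hherm
  set B := pinv Γ.Lplus with hB
  set r : ℝ := u ⬝ᵥ B *ᵥ u with hr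
  have hBt : Bᵀ = B := pinv_symm hherm hsymmM
  have husum : ∑ k, u k = 0 := by
    simp [hu, Pi.sub_apply, Finset.sum_sub_distrib]
  -- kernel of Lplus is constants, by connectivity
  have hconn : ∀ y : Fin n → ℝ, lap Γ.wplus *ᵥ y = 0 → ∀ k l, y k = y l := by
    intro y hy
    have hq0 : ∑ k, ∑ l, Γ.wplus k l * (y k - y l) ^ 2 = 0 := by
      rw [← lap_quad Γ.wplus_symm Γ.wplus_diag, hy]
      simp
    have hterm : ∀ k l : Fin n, Γ.wplus k l * (y k - y l) ^ 2 = 0 := by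
      intro k l
      have hnn : ∀ k ∈ Finset.univ, (0:ℝ) ≤ ∑ l, Γ.wplus k l * (y k - y l) ^ 2 :=
        fun k _ => Finset.sum_nonneg fun l _ =>
          mul_nonneg (Γ.wplus_nonneg k l) (sq_nonneg _)
      have h1' := (Finset.sum_eq_zero_iff_of_nonneg hnn).1 hq0 k (Finset.mem_univ k)
      exact (Finset.sum_eq_zero_iff_of_nonneg fun l _ =>
        mul_nonneg (Γ.wplus_nonneg k l) (sq_nonneg _)).1 h1' l (Finset.mem_univ l)
    have hadj : ∀ a b : Fin n, Γ.posGraph.Adj a b → y a = y b := by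
      intro a b hab
      rw [SignedGraph.posGraph, SimpleGraph.fromRel_adj] at hab
      obtain ⟨hne', h'⟩ := hab
      have hw : 0 < Γ.wplus a b := by
        rcases h' with h' | h'
        · exact h'
        · rw [Γ.wplus_symm]; exact h'
      have ht := hterm a b
      have h2' : (y a - y b) ^ 2 = 0 := by
        rcases mul_eq_zero.mp ht with h' | h'
        · exact absurd h' hw.ne'
        · exact h'
      have := pow_eq_zero_iff (n := 2) (by norm_num) |>.mp h2'
      linarith [sub_eq_zero.mp this]
    intro k l
    suffices h : ∀ {a b : Fin n}, Γ.posGraph.Walk a b → y a = y b by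
      obtain ⟨p⟩ := hpc.preconnected k l
      exact h p
    intro a b p
    induction p with
    | nil => rfl
    | cons hab p ih => exact (hadj _ _ hab).trans ih
  obtain ⟨z, hz⟩ := lap_exists_preimage Γ.wplus_symm Γ.wplus_diag hconn hn husum
  have hz' : Γ.Lplus *ᵥ z = u := hz
  set x : Fin n → ℝ := B *ᵥ u with hx
  have hAx : Γ.Lplus *ᵥ x = u := by
    rw [hx, ← hz', Matrix.mulVec_mulVec, Matrix.mulVec_mulVec, h1]
  have hxAx : x ⬝ᵥ Γ.Lplus *ᵥ x = r := by
    rw [hx, mulVec_dot, hBt, Matrix.mulVec_mulVec, Matrix.mulVec_mulVec, h2]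
  have hxdiff : x i - x j = r := by
    have hux : u ⬝ᵥ x = x i - x j := by
      rw [hu]
      rw [sub_dotProduct, single_dotProduct, single_dotProduct]
      ring
    rw [← hux, hr, hx]
  have hr_nonneg : (0:ℝ) ≤ r := by
    rw [← hxAx]
    exact lap_quad_nonneg Γ.wplus_symm Γ.wplus_diag Γ.wplus_nonneg x
  have hpsdL : Γ.Lplus.PosSemidef :=
    lap_posSemidef Γ.wplus_symm Γ.wplus_diag Γ.wplus_nonneg
  have hrpos : (0:ℝ) < r := by
    rcases hr_nonneg.lt_or_eq with h | h
    · exact h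
    · exfalso
      have hzero : star x ⬝ᵥ Γ.Lplus *ᵥ x = 0 := by
        simpa [star_trivial] using (hxAx.trans h.symm)
      have := (hpsdL.dotProduct_mulVec_zero_iff x).mp hzero
      rw [hAx] at this
      have hui := congrFun this i
      rw [hu] at hui
      simp [Pi.sub_apply, Pi.single_eq_same, Pi.single_eq_of_ne hne] at hui
  have hwr_pos : (0:ℝ) < Γ.wminus i j * r := mul_pos hwij hrpos
  rw [SignedGraph.consensusIndex]
  apply Real.sSup_le
  · rintro ε ⟨hε, hpsd, -⟩
    have h0 : (0:ℝ) ≤ x ⬝ᵥ (Γ.Leps ε) *ᵥ x := by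
      simpa [star_trivial] using hpsd.dotProduct_mulVec_nonneg x
    have hexp : x ⬝ᵥ (Γ.Leps ε) *ᵥ x = r - ε * (x ⬝ᵥ Γ.Lminus *ᵥ x) := by
      rw [SignedGraph.Leps, Matrix.sub_mulVec, dotProduct_sub,
        Matrix.smul_mulVec, dotProduct_smul, hxAx]
      simp [smul_eq_mul]
    have hq : Γ.wminus i j * r ^ 2 ≤ x ⬝ᵥ Γ.Lminus *ᵥ x := by
      have hge := lap_quad_ge Γ.wminus_symm Γ.wminus_diag Γ.wminus_nonneg x hne
      rw [hxdiff] at hge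
      exact hge
    have hkey : ε * (Γ.wminus i j * r) ≤ 1 := by
      nlinarith [mul_le_mul_of_nonneg_left hq hε.le, hexp ▸ h0, hrpos, sq_nonneg r]
    rw [le_div_iff₀ hwr_pos]
    linarith
  · positivity
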